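/- The one-point extension L(X) = (ω × X) ∪ {p}, where p has neighborhood base {{p} ∪ W : W a finite intersection of the sets W_α}, is a 0-dimensional Hausdorff topological space. -/

import Mathlib

open Set Topology TopologicalSpace

noncomputable def omega1 : Ordinal := (Cardinal.aleph 1).ord

/-- `X` satisfies the countable chain condition. -/
def CCC (Y : Type*) [TopologicalSpace Y] : Prop :=
  ∀ 𝒰 : Set (Set Y), (∀ U ∈ 𝒰, IsOpen U ∧ U.Nonempty) → 𝒰.PairwiseDisjoint id →
    𝒰.Countable

/-- The topology of the one-point extension `L(X) = (ω × X) ∪ {p}`, with the extra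
point `p` represented by `none`: a set `O` is open iff its trace on `ω × X` is open
and, in case `p ∈ O`, `O` contains `{p} ∪ W` for some finite intersection `W` of the
sets `W_α` with `α < ω₁`. -/
def LTopology {X : Type*} [TopologicalSpace X] (W : Ordinal → Set (ℕ × X)) :
    TopologicalSpace (Option (ℕ × X)) where
  IsOpen O := IsOpen {z : ℕ × X | some z ∈ O} ∧
    (none ∈ O → ∃ F : Finset Ordinal, (∀ α ∈ F, α < omega1) ∧
      ∀ z : ℕ × X, (∀ α ∈ F, z ∈ W α) → some z ∈ O)
  isOpen_univ := ⟨isOpen_univ, fun _ => ⟨∅, by simp, fun _ _ => trivial⟩⟩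
  isOpen_inter := by
    rintro s t ⟨hs1, hs2⟩ ⟨ht1, ht2⟩
    refine ⟨hs1.inter ht1, fun hn => ?_⟩
    obtain ⟨F1, hF1, hF1'⟩ := hs2 hn.1
    obtain ⟨F2, hF2, hF2'⟩ := ht2 hn.2
    refine ⟨F1 ∪ F2, fun α hα => ?_, fun z hz => ?_⟩
    · rcases Finset.mem_union.1 hα with h | h
      exacts [hF1 α h, hF2 α h]
    · exact ⟨hF1' z fun α hα => hz α (Finset.mem_union_left _ hα),
        hF2' z fun α hα => hz α (Finset.mem_union_right _ hα)⟩
  isOpen_sUnion := by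
    intro S hS
    constructor
    · have : {z : ℕ × X | some z ∈ ⋃₀ S} = ⋃ s ∈ S, {z : ℕ × X | some z ∈ s} := by
        ext z; simp
      rw [this]
      exact isOpen_biUnion fun s hs => (hS s hs).1
    · rintro ⟨s, hsS, hns⟩
      obtain ⟨F, hF, hF'⟩ := (hS s hsS).2 hns
      exact ⟨F, hF, fun z hz => ⟨s, hsS, hF' z hz⟩⟩

/-- The one-point extension `L(X)` is a 0-dimensional Hausdorff space. -/
theorem LX_zero_dimensional_T2 {X : Type*} [TopologicalSpace X] [T2Space X]
    (h0 : IsTopologicalBasis {s : Set X | IsClopen s})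
    (hccc : CCC X)
    (K : Ordinal → Set X)
    (hKne : ∀ α < omega1, (K α).Nonempty)
    (hKcl : ∀ α < omega1, IsClosed (K α))
    (hKnd : ∀ α < omega1, IsNowhereDense (K α))
    (hKcov : ∀ x : X, ∃ α < omega1, x ∈ K α)
    (U : Ordinal → ℕ → Set X)
    (hUclopen : ∀ α < omega1, ∀ n : ℕ, IsClopen (U α n))
    (hUsub : ∀ α < omega1, ∀ n : ℕ, U α n ⊆ (K α)ᶜ)
    (hUdisj : ∀ α < omega1, ∀ m n : ℕ, m ≠ n → Disjoint (U α m) (U α n))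
    (hUmax : ∀ α < omega1, ∀ V : Set X, IsClopen V → V ⊆ (K α)ᶜ → V.Nonempty →
      ∃ n : ℕ, (V ∩ U α n).Nonempty)
    (W : Ordinal → Set (ℕ × X))
    (hW : ∀ α : Ordinal, W α = ⋃ n : ℕ, ({n} : Set ℕ) ×ˢ (⋃ i ≤ n, U α i)) :
    @T2Space (Option (ℕ × X)) (LTopology W) ∧
    @IsTopologicalBasis (Option (ℕ × X)) (LTopology W)
      {s : Set (Option (ℕ × X)) | @IsClopen (Option (ℕ × X)) (LTopology W) s} := by

  classical
  letI t : TopologicalSpace (Option (ℕ × X)) := LTopology W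
  have hopen : ∀ O : Set (Option (ℕ × X)), IsOpen O ↔
      (IsOpen {z : ℕ × X | some z ∈ O} ∧
      (none ∈ O → ∃ F : Finset Ordinal, (∀ α ∈ F, α < omega1) ∧
        ∀ z : ℕ × X, (∀ α ∈ F, z ∈ W α) → some z ∈ O)) := fun _ => Iff.rfl
  -- the slices of W α
  have hVclopen : ∀ α < omega1, ∀ n : ℕ, IsClopen (⋃ i ≤ n, U α i) := by
    intro α hα n
    exact (Set.finite_Iic n).isClopen_biUnion fun i _ => hUclopen α hα i
  have hmemW : ∀ α : Ordinal, ∀ z : ℕ × X, z ∈ W α ↔ z.2 ∈ ⋃ i ≤ z.1, U α i := by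
    intro α z
    rw [hW]
    simp only [Set.mem_iUnion, Set.mem_prod, Set.mem_singleton_iff]
    constructor
    · rintro ⟨n, rfl, h⟩; exact h
    · intro h; exact ⟨z.1, rfl, h⟩
  have hWopen : ∀ α < omega1, IsOpen (W α) := by
    intro α hα
    rw [hW]
    exact isOpen_iUnion fun n =>
      (isOpen_discrete _).prod (hVclopen α hα n).isOpen
  have hWclosed : ∀ α < omega1, IsClosed (W α) := by
    intro α hα
    rw [← isOpen_compl_iff]
    have : (W α)ᶜ = ⋃ n : ℕ, ({n} : Set ℕ) ×ˢ (⋃ i ≤ n, U α i)ᶜ := by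
      ext z
      simp only [Set.mem_compl_iff, hmemW, Set.mem_iUnion, Set.mem_prod,
        Set.mem_singleton_iff]
      constructor
      · intro h; exact ⟨z.1, rfl, h⟩
      · rintro ⟨n, rfl, h⟩; exact h
    rw [this]
    exact isOpen_iUnion fun n =>
      (isOpen_discrete _).prod (hVclopen α hα n).compl.isOpen
  -- every point of ω × X lies outside some W α
  have hzW : ∀ z : ℕ × X, ∃ α, α < omega1 ∧ z ∉ W α := by
    intro z
    obtain ⟨α, hα, hK⟩ := hKcov z.2
    refine ⟨α, hα, ?_⟩
    rw [hmemW]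
    rintro h
    obtain ⟨i, -, hi⟩ := Set.mem_iUnion₂.1 h
    exact hUsub α hα i hi hK
  have htrace : ∀ C : Set (ℕ × X), {z : ℕ × X | some z ∈ some '' C} = C := by
    intro C; ext z; simp
  have hnone : ∀ C : Set (ℕ × X), none ∉ some '' C := by
    rintro C ⟨z, -, h⟩; exact nomatch h
  -- images of open sets are open
  have himage_open : ∀ C : Set (ℕ × X), IsOpen C → IsOpen (some '' C) := by
    intro C hC
    rw [hopen, htrace]
    exact ⟨hC, fun h => absurd h (hnone C)⟩
  -- images of clopen sets disjoint from some W α are clopen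
  have himage_clopen : ∀ C : Set (ℕ × X), IsClopen C →
      ∀ α, α < omega1 → Disjoint C (W α) → IsClopen (some '' C) := by
    intro C hC α hα hdisj
    refine ⟨?_, himage_open C hC.isOpen⟩
    rw [← isOpen_compl_iff, hopen]
    constructor
    · have : {z : ℕ × X | some z ∈ (some '' C)ᶜ} = Cᶜ := by
        ext z; simp
      rw [this]
      exact hC.isClosed.isOpen_compl
    · intro _
      refine ⟨{α}, by simpa using hα, fun z hz => ?_⟩
      have hzWα : z ∈ W α := hz α (Finset.mem_singleton_self α)
      intro hmem
      obtain ⟨w, hw, hw'⟩ := hmem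
      rw [Option.some_inj] at hw'
      subst hw'
      exact (Set.disjoint_left.1 hdisj hw) hzWα
  -- basic clopen neighborhoods of the point at infinity
  have hcone_clopen : ∀ F : Finset Ordinal, (∀ α ∈ F, α < omega1) →
      IsClopen (insert none (some '' ⋂ α ∈ F, W α)) := by
    intro F hF
    constructor
    · rw [← isOpen_compl_iff, hopen]
      constructor
      · have : {z : ℕ × X | some z ∈ (insert none (some '' ⋂ α ∈ F, W α))ᶜ} =
            (⋂ α ∈ F, W α)ᶜ := by
          ext z; simp
        rw [this, isOpen_compl_iff]
        exact isClosed_biInter fun α hα => hWclosed α (hF α hα)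
      · intro h
        exact absurd (Set.mem_insert _ _) h
    · rw [hopen]
      constructor
      · have : {z : ℕ × X | some z ∈ insert none (some '' ⋂ α ∈ F, W α)} =
            ⋂ α ∈ F, W α := by
          ext z; simp
        rw [this]
        exact isOpen_biInter_finset fun α hα => hWopen α (hF α hα)
      · intro _
        exact ⟨F, hF, fun z hz => Set.mem_insert_iff.2 (Or.inr
          ⟨z, Set.mem_iInter₂.2 hz, rfl⟩)⟩
  constructor
  · -- T2
    refine ⟨fun a b hab => ?_⟩
    match a, b with
    | none, none => exact absurd rfl hab
    | none, some z =>
      obtain ⟨α, hα, hzα⟩ := hzW z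
      refine ⟨insert none (some '' W α), some '' (W α)ᶜ, ?_, ?_, ?_, ?_, ?_⟩
      · have := hcone_clopen {α} (by simpa using hα)
        simpa using this.isOpen
      · exact himage_open _ (hWclosed α hα).isOpen_compl
      · exact Set.mem_insert _ _
      · exact ⟨z, hzα, rfl⟩
      · rw [Set.disjoint_left]
        rintro x hx hx'
        obtain ⟨w, hw, rfl⟩ := hx'
        rcases Set.mem_insert_iff.1 hx with h | ⟨w', hw', hw''⟩
        · exact nomatch h
        · rw [Option.some_inj] at hw''
          subst hw''
          exact hw hw'
    | some z, none =>
      obtain ⟨α, hα, hzα⟩ := hzW z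
      refine ⟨some '' (W α)ᶜ, insert none (some '' W α), ?_, ?_, ?_, ?_, ?_⟩
      · exact himage_open _ (hWclosed α hα).isOpen_compl
      · have := hcone_clopen {α} (by simpa using hα)
        simpa using this.isOpen
      · exact ⟨z, hzα, rfl⟩
      · exact Set.mem_insert _ _
      · rw [Set.disjoint_left]
        rintro x hx hx'
        obtain ⟨w, hw, rfl⟩ := hx
        rcases Set.mem_insert_iff.1 hx' with h | ⟨w', hw', hw''⟩
        · exact nomatch h
        · rw [Option.some_inj] at hw''
          subst hw''
          exact hw hw'
    | some z1, some z2 =>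
      have hz : z1 ≠ z2 := fun h => hab (by rw [h])
      obtain ⟨A, B, hA, hB, hz1, hz2, hAB⟩ := t2_separation hz
      refine ⟨some '' A, some '' B, himage_open A hA, himage_open B hB,
        ⟨z1, hz1, rfl⟩, ⟨z2, hz2, rfl⟩, ?_⟩
      rw [Set.disjoint_left]
      rintro x ⟨w, hw, rfl⟩ ⟨w', hw', hw''⟩
      rw [Option.some_inj] at hw''
      subst hw''
      exact Set.disjoint_left.1 hAB hw hw'
  · -- basis of clopen sets
    apply isTopologicalBasis_of_isOpen_of_nhds
    · exact fun u hu => hu.isOpen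
    · intro a u hau hu
      match a with
      | none =>
        obtain ⟨F, hF, hF'⟩ := ((hopen u).1 hu).2 hau
        refine ⟨insert none (some '' ⋂ α ∈ F, W α), hcone_clopen F hF,
          Set.mem_insert _ _, ?_⟩
        rintro x hx
        rcases Set.mem_insert_iff.1 hx with rfl | ⟨z, hz, rfl⟩
        · exact hau
        · exact hF' z (Set.mem_iInter₂.1 hz)
      | some z =>
        obtain ⟨α, hα, hzα⟩ := hzW z
        have hxV : z.2 ∉ ⋃ i ≤ z.1, U α i := fun h => hzα ((hmemW α z).2 h)
        have hSopen : IsOpen {x : X | some (z.1, x) ∈ u} :=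
          ((hopen u).1 hu).1.preimage (Continuous.prodMk_right z.1)
        obtain ⟨D, hD, hxD, hDsub⟩ := h0.exists_subset_of_mem_open
          (show z.2 ∈ {x : X | some (z.1, x) ∈ u} ∩ (⋃ i ≤ z.1, U α i)ᶜ from ⟨hau, hxV⟩)
          (hSopen.inter (hVclopen α hα z.1).isClosed.isOpen_compl)
        have hDclopen : IsClopen D := hD
        have hCclopen : IsClopen (({z.1} : Set ℕ) ×ˢ D) :=
          (isClopen_discrete _).prod hDclopen
        have hCdisj : Disjoint (({z.1} : Set ℕ) ×ˢ D) (W α) := by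
          rw [Set.disjoint_left]
          rintro ⟨m, x⟩ ⟨hm, hx⟩ hW'
          rw [Set.mem_singleton_iff] at hm
          subst hm
          exact (hDsub hx).2 ((hmemW α (z.1, x)).1 hW')
        refine ⟨some '' (({z.1} : Set ℕ) ×ˢ D), himage_clopen _ hCclopen α hα hCdisj,
          ⟨z, ⟨rfl, hxD⟩, rfl⟩, ?_⟩
        rintro x ⟨⟨m, y⟩, ⟨hm, hy⟩, rfl⟩
        rw [Set.mem_singleton_iff] at hm
        subst hm
        exact (hDsub hy).1
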